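/- Let C, P, P̃ ∈ E with P ≠ P̃, let u := ‖P − P̃‖⁻¹ • (P − P̃), and let d̂ ∈ ℝ satisfy dist C P ≤ d̂. Then dist P P̃ ≤ R(C, d̂, P̃, u). (Per-challenger soundness: an honest challenger's directional uncertainty in the true direction of Waldo upper-bounds the true deviation.) -/

import Mathlib

open EuclideanSpace

/-- The plane. -/
local notation "E" => EuclideanSpace ℝ (Fin 2)

/-- Directional uncertainty `R(C, d̂, P̃, u) = s + sqrt (d̂² − d̃² + s²)`,
where `d̃ = ‖C − P̃‖` and `s = ⟪C − P̃, u⟫_ℝ`. -/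
noncomputable def dirUnc (C Pt : EuclideanSpace ℝ (Fin 2)) (dhat : ℝ)
    (u : EuclideanSpace ℝ (Fin 2)) : ℝ :=
  (inner ℝ (C - Pt) u : ℝ) +
    Real.sqrt (dhat ^ 2 - ‖C - Pt‖ ^ 2 + (inner ℝ (C - Pt) u : ℝ) ^ 2)

/-- Per-challenger soundness: an honest challenger's directional uncertainty in
the true direction of Waldo upper-bounds the true deviation. -/
theorem per_challenger_soundness (C P Pt : E) (hne : P ≠ Pt) (dhat : ℝ)
    (h : dist C P ≤ dhat) :
    dist P Pt ≤ dirUnc C Pt dhat (‖P - Pt‖⁻¹ • (P - Pt)) := by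
  set v : E := P - Pt with hv
  set w : E := C - Pt with hw
  have ht : (0:ℝ) < ‖v‖ := by
    rw [norm_pos_iff]
    exact sub_ne_zero.mpr hne
  set t : ℝ := ‖v‖ with htdef
  set s : ℝ := (inner ℝ w (t⁻¹ • v) : ℝ) with hs
  have hst : s = t⁻¹ * (inner ℝ w v : ℝ) := by
    simp [hs, inner_smul_right]
  have hCP : C - P = w - v := by simp [hw, hv]
  have hnormCP : ‖C - P‖ ^ 2 = ‖w‖ ^ 2 - 2 * (inner ℝ w v : ℝ) + t ^ 2 := by
    rw [hCP, htdef, @norm_sub_sq_real]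
  have hiv : (inner ℝ w v : ℝ) = t * s := by
    rw [hst]; field_simp
  have hd0 : ‖C - P‖ ≤ dhat := by rwa [← dist_eq_norm]
  have hd2 : ‖C - P‖ ^ 2 ≤ dhat ^ 2 :=
    pow_le_pow_left₀ (norm_nonneg _) hd0 2
  have hkey : (t - s) ^ 2 ≤ dhat ^ 2 - ‖w‖ ^ 2 + s ^ 2 := by
    nlinarith [hnormCP, hd2, hiv]
  have hsqrt : t - s ≤ Real.sqrt (dhat ^ 2 - ‖w‖ ^ 2 + s ^ 2) := by
    calc t - s ≤ |t - s| := le_abs_self _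
    _ = Real.sqrt ((t - s) ^ 2) := (Real.sqrt_sq_eq_abs _).symm
    _ ≤ _ := Real.sqrt_le_sqrt hkey
  have : dist P Pt = t := by rw [dist_eq_norm]
  rw [this, dirUnc]
  rw [← hs]
  linarith
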